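/- Let (Ω, μ) be a probability space and f: Ω → Ω an invertible measure-preserving transformation which is strongly mixing in the sense that for all ψ₁, ψ₂ ∈ L²(μ), ⟨ψ₁, Uⁿψ₂⟩ → (∫ ψ̄₁ dμ)(∫ ψ₂ dμ) as n → ∞, where U is the Koopman operator. Let W be a finite-dimensional subspace of L²(μ) containing the constant functions, with orthogonal projection π, and let φ ∈ L²(μ). Then lim_{n→∞} ‖(Id − π) Uⁿφ‖_{L²(μ)} = ‖φ − ∫ φ dμ‖_{L²(μ)}. -/

import Mathlib

open Filter Topology MeasureTheory
open scoped Classical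

set_option maxHeartbeats 1000000 in
/-- for a strongly mixing system, the direct forecast error
‖(Id − π) Uⁿφ‖ converges (along the full sequence of times) to the L²
deviation of φ from its mean. -/
theorem direct_forecast_error_strong_mixing {Ω : Type*} [MeasurableSpace Ω]
    (μ : Measure Ω) [IsProbabilityMeasure μ]
    (f : Ω ≃ᵐ Ω) (hf : MeasurePreserving f μ μ)
    (U : Lp ℂ 2 μ →L[ℂ] Lp ℂ 2 μ)
    (hU : ∀ h : Lp ℂ 2 μ, ⇑(U h) =ᵐ[μ] fun x => h (f x))
    (hmix : ∀ ψ₁ ψ₂ : Lp ℂ 2 μ,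
      Tendsto (fun n : ℕ => (inner ℂ ψ₁ ((U ^ n) ψ₂) : ℂ)) atTop
        (nhds ((∫ x, (starRingEnd ℂ) (ψ₁ x) ∂μ) * (∫ x, ψ₂ x ∂μ))))
    (W : Submodule ℂ (Lp ℂ 2 μ)) [FiniteDimensional ℂ W]
    (hWconst : ∀ h : Lp ℂ 2 μ, (∃ c : ℂ, ⇑h =ᵐ[μ] fun _ => c) → h ∈ W)
    (φ : Lp ℂ 2 μ) :
    Tendsto (fun n : ℕ =>
        ‖(U ^ n) φ - ((Submodule.orthogonalProjection W ((U ^ n) φ) : W) : Lp ℂ 2 μ)‖)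
      atTop
      (nhds ‖φ - (memLp_const (∫ x, φ x ∂μ)).toLp (fun _ => ∫ x, φ x ∂μ)‖) := by
  set c : ℂ := ∫ x, φ x ∂μ with hc
  set cLp : Lp ℂ 2 μ := (memLp_const c).toLp (fun _ => c) with hcLpdef
  have hcLp_coe : ⇑cLp =ᵐ[μ] fun _ => c := MemLp.coeFn_toLp _
  have hcW : cLp ∈ W := hWconst _ ⟨c, hcLp_coe⟩
  -- U is norm preserving
  have hUnorm : ∀ h : Lp ℂ 2 μ, ‖U h‖ = ‖h‖ := by
    intro h
    rw [Lp.norm_def, Lp.norm_def, eLpNorm_congr_ae (hU h)]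
    congr 1
    exact eLpNorm_comp_measurePreserving (Lp.aestronglyMeasurable h) hf
  have hUpownorm : ∀ n : ℕ, ∀ h : Lp ℂ 2 μ, ‖(U ^ n) h‖ = ‖h‖ := by
    intro n
    induction n with
    | zero => intro h; simp
    | succ n ih =>
        intro h
        rw [pow_succ, ContinuousLinearMap.mul_apply, ih (U h), hUnorm]
  -- U fixes the constants
  have hUc : U cLp = cLp := by
    apply Lp.ext
    refine (hU cLp).trans ?_
    have h2 : (⇑cLp ∘ ⇑f) =ᵐ[μ] ((fun _ : Ω => c) ∘ ⇑f) :=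
      hf.quasiMeasurePreserving.ae_eq_comp hcLp_coe
    exact (h2.trans (by rfl)).trans hcLp_coe.symm
  have hUnc : ∀ n : ℕ, (U ^ n) cLp = cLp := by
    intro n
    induction n with
    | zero => simp
    | succ n ih => rw [pow_succ, ContinuousLinearMap.mul_apply, hUc, ih]
  -- the centered observable
  set φ₀ : Lp ℂ 2 μ := φ - cLp with hφ₀def
  have hφint : Integrable (⇑φ) μ := (Lp.memLp φ).integrable (by norm_num)
  have hcint : Integrable (⇑cLp) μ := (Lp.memLp cLp).integrable (by norm_num)
  have hcLp_int : ∫ x, cLp x ∂μ = c := by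
    rw [integral_congr_ae hcLp_coe]
    simp
  have hφ₀int : ∫ x, φ₀ x ∂μ = 0 := by
    rw [integral_congr_ae (Lp.coeFn_sub φ cLp)]
    simp only [Pi.sub_apply]
    rw [integral_sub hφint hcint, hcLp_int]
    simp [hc]
  -- mixing: inner products with Uⁿφ₀ tend to 0
  have hmix0 : ∀ ψ : Lp ℂ 2 μ,
      Tendsto (fun n : ℕ => (inner ℂ ψ ((U ^ n) φ₀) : ℂ)) atTop (nhds 0) := by
    intro ψ
    have := hmix ψ φ₀
    rwa [hφ₀int, mul_zero] at this
  -- the projection of Uⁿφ₀ tends to 0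
  set b : OrthonormalBasis (Fin (Module.finrank ℂ W)) ℂ W :=
    stdOrthonormalBasis ℂ W with hb
  have hproj : Tendsto
      (fun n : ℕ => ((Submodule.orthogonalProjection W ((U ^ n) φ₀) : W) : Lp ℂ 2 μ))
      atTop (nhds 0) := by
    have heq : ∀ n : ℕ,
        ((Submodule.orthogonalProjection W ((U ^ n) φ₀) : W) : Lp ℂ 2 μ)
          = ∑ i, (inner ℂ ((b i : Lp ℂ 2 μ)) ((U ^ n) φ₀) : ℂ) • (b i : Lp ℂ 2 μ) := by
      intro n
      rw [b.orthogonalProjection_apply_eq_sum]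
      push_cast
      simp
    simp_rw [heq]
    have : Tendsto
        (fun n : ℕ => ∑ i, (inner ℂ ((b i : Lp ℂ 2 μ)) ((U ^ n) φ₀) : ℂ) • (b i : Lp ℂ 2 μ))
        atTop (nhds (∑ i : Fin (Module.finrank ℂ W), (0 : Lp ℂ 2 μ))) := by
      refine tendsto_finset_sum _ fun i _ => ?_
      have := (hmix0 (b i)).smul_const ((b i : Lp ℂ 2 μ))
      simpa using this
    simpa using this
  -- identify the terms of the sequence
  have hkey : ∀ n : ℕ,
      (U ^ n) φ - ((Submodule.orthogonalProjection W ((U ^ n) φ) : W) : Lp ℂ 2 μ)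
        = (U ^ n) φ₀ - ((Submodule.orthogonalProjection W ((U ^ n) φ₀) : W) : Lp ℂ 2 μ) := by
    intro n
    have hφeq : (U ^ n) φ = (U ^ n) φ₀ + cLp := by
      rw [hφ₀def, map_sub, hUnc n]; abel
    rw [hφeq, map_add]
    have hcproj : ((Submodule.orthogonalProjection W cLp : W) : Lp ℂ 2 μ) = cLp :=
      Submodule.starProjection_eq_self_iff.2 hcW
    push_cast
    rw [hcproj]
    abel
  simp_rw [hkey]
  -- squeeze
  have hnorm0 : ∀ n : ℕ, ‖(U ^ n) φ₀‖ = ‖φ₀‖ := fun n => hUpownorm n φ₀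
  rw [tendsto_iff_dist_tendsto_zero]
  have hbound : ∀ n : ℕ,
      dist ‖(U ^ n) φ₀ - ((Submodule.orthogonalProjection W ((U ^ n) φ₀) : W) : Lp ℂ 2 μ)‖ ‖φ₀‖
        ≤ ‖((Submodule.orthogonalProjection W ((U ^ n) φ₀) : W) : Lp ℂ 2 μ)‖ := by
    intro n
    rw [Real.dist_eq, ← hnorm0 n]
    calc |‖(U ^ n) φ₀ - ((Submodule.orthogonalProjection W ((U ^ n) φ₀) : W) : Lp ℂ 2 μ)‖ - ‖(U ^ n) φ₀‖|
        ≤ ‖((U ^ n) φ₀ - ((Submodule.orthogonalProjection W ((U ^ n) φ₀) : W) : Lp ℂ 2 μ)) - (U ^ n) φ₀‖ :=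
          abs_norm_sub_norm_le _ _
      _ = ‖((Submodule.orthogonalProjection W ((U ^ n) φ₀) : W) : Lp ℂ 2 μ)‖ := by
          rw [sub_sub_cancel_left, norm_neg]
  have hnormproj : Tendsto
      (fun n : ℕ => ‖((Submodule.orthogonalProjection W ((U ^ n) φ₀) : W) : Lp ℂ 2 μ)‖)
      atTop (nhds 0) := by
    simpa using hproj.norm
  exact squeeze_zero (fun n => dist_nonneg) hbound hnormproj
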